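/- Let K be a field, X a k×n matrix over K of rank k, and λ ∈ (K^*)^n such that X·diag(λ)·Xᵀ = 0. Let M be the column matroid of X, i.e. the matroid on the ground set {1,…,n} whose independent sets are exactly the subsets I such that the columns of X indexed by I are linearly independent. Then M has no half-coloop (that is, M is a self-projecting matroid). -/

import Mathlib

set_option maxHeartbeats 1000000

/-- An element `e` of the ground set of a matroid `M` of rank `k` is a *half-coloop* if
there exist (not necessarily distinct) flats `F₁, F₂` of `M`, each of rank `k - 1`,
with `F₁ ∪ F₂ = M.E \ {e}`. -/
def Matroid.IsHalfColoop {α : Type*} (M : Matroid α) (k : ℕ) (e : α) : Prop :=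
  ∃ F₁ F₂ : Set α, M.IsFlat F₁ ∧ M.IsFlat F₂ ∧
    (∃ I : Set α, M.IsBasis I F₁ ∧ I.ncard = k - 1) ∧
    (∃ I : Set α, M.IsBasis I F₂ ∧ I.ncard = k - 1) ∧
    F₁ ∪ F₂ = M.E \ {e}

open Set Matrix Module

/-- From a flat with a matroid basis of size `k - 1` in the column matroid of `X`
(with `k ≥ 1`), one can extract a linear functional vanishing precisely on the
columns indexed by the flat. -/
lemma exists_functional_of_flat {K : Type*} [Field K] {k n : ℕ}
    (X : Matrix (Fin k) (Fin n) K)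
    (M : Matroid (Fin n)) (hE : M.E = Set.univ)
    (hindep : ∀ I : Set (Fin n),
      M.Indep I ↔ LinearIndependent K (fun j : I => fun i : Fin k => X i (j : Fin n)))
    {F I : Set (Fin n)} (hF : M.IsFlat F) (hI : M.IsBasis I F) (hcard : I.ncard = k - 1)
    (hk : 1 ≤ k) :
    ∃ φ : (Fin k → K) →ₗ[K] K, ∀ j : Fin n, (φ (fun i => X i j) = 0 ↔ j ∈ F) := by
  classical
  set c : Fin n → (Fin k → K) := fun j i => X i j with hc
  haveI : Fintype ↥I := (Set.toFinite I).fintype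
  have hIind : LinearIndependent K (fun j : I => c j) := (hindep I).1 hI.indep
  set W : Submodule K (Fin k → K) := Submodule.span K (Set.range (fun j : I => c j)) with hW
  have hrange : Set.range (fun j : I => c j) = c '' I := by
    ext x; simp [Set.range, Set.mem_image]
  have hWrank : finrank K W = k - 1 := by
    rw [hW, finrank_span_eq_card hIind, ← hcard, ← Nat.card_coe_set_eq,
      Nat.card_eq_fintype_card]
  have hfull : finrank K (Fin k → K) = k := Module.finrank_fin_fun K
  have hWlt : W < ⊤ := by
    rw [lt_top_iff_ne_top]
    intro h
    rw [h] at hWrank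
    rw [finrank_top, hfull] at hWrank
    omega
  obtain ⟨φ, hφ0, hφmap⟩ := Submodule.exists_dual_map_eq_bot_of_lt_top hWlt inferInstance
  have hWker : W ≤ LinearMap.ker φ := by
    intro x hx
    have : φ x ∈ W.map φ := Submodule.mem_map_of_mem hx
    rw [hφmap] at this
    exact LinearMap.mem_ker.2 ((Submodule.mem_bot K).1 this)
  have hkerrank : finrank K (LinearMap.ker φ) = k - 1 := by
    have h1 : finrank K (LinearMap.range φ) + finrank K (LinearMap.ker φ)
        = finrank K (Fin k → K) := LinearMap.finrank_range_add_finrank_ker φ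
    have h2 : LinearMap.range φ = ⊤ := by
      obtain ⟨x, hx⟩ : ∃ x, φ x ≠ 0 := by
        by_contra h
        push_neg at h
        exact hφ0 (LinearMap.ext fun x => h x)
      rw [LinearMap.range_eq_top]
      intro y
      exact ⟨(y * (φ x)⁻¹) • x, by rw [LinearMap.map_smul, smul_eq_mul, mul_assoc,
        inv_mul_cancel₀ hx, mul_one]⟩
    rw [h2, finrank_top, Module.finrank_self, hfull] at h1
    omega
  have hWeq : W = LinearMap.ker φ :=
    Submodule.eq_of_le_of_finrank_eq hWker (by rw [hWrank, hkerrank])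
  refine ⟨φ, fun j => ?_⟩
  have hspan : (φ (c j) = 0) ↔ c j ∈ Submodule.span K (c '' I) := by
    rw [← hrange, ← hW, hWeq]; exact (LinearMap.mem_ker).symm
  by_cases hjI : j ∈ I
  · change φ (c j) = 0 ↔ j ∈ F
    simp only [hspan]
    exact iff_of_true (Submodule.subset_span ⟨j, hjI, rfl⟩) (hI.subset hjI)
  · have hclosure : M.closure I = F := by
      rw [hI.closure_eq_closure, hF.closure]
    have hins : M.Indep (insert j I) ↔ j ∈ M.E \ M.closure I :=
      hI.indep.insert_indep_iff_of_notMem hjI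
    have hins' : M.Indep (insert j I) ↔
        (LinearIndependent K (fun x : I => c x) ∧ c j ∉ Submodule.span K (c '' I)) := by
      rw [hindep]
      exact linearIndepOn_insert (f := c) (s := I) (a := j) hjI
    change φ (c j) = 0 ↔ j ∈ F
    rw [hspan]
    constructor
    · intro hmem
      by_contra hjF
      have : M.Indep (insert j I) := by
        rw [hins, hclosure, hE]
        exact ⟨Set.mem_univ j, hjF⟩
      exact ((hins'.1 this).2) hmem
    · intro hjF
      by_contra hmem
      have : M.Indep (insert j I) := hins'.2 ⟨hIind, hmem⟩
      rw [hins, hclosure] at this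
      exact this.2 hjF

/-- The key bilinear identity: if `X * diag(lam) * Xᵀ = 0` then for any two linear
functionals `φ₁, φ₂` on `K^k`, the weighted sum of products over the columns vanishes. -/
lemma sum_lam_mul_eq_zero {K : Type*} [Field K] {k n : ℕ}
    (X : Matrix (Fin k) (Fin n) K)
    (lam : Fin n → K)
    (hsp : X * Matrix.diagonal lam * X.transpose = 0)
    (φ₁ φ₂ : (Fin k → K) →ₗ[K] K) :
    ∑ j : Fin n, lam j * (φ₁ (fun i => X i j) * φ₂ (fun i => X i j)) = 0 := by
  set e : Fin k → (Fin k → K) := fun i j => if i = j then 1 else 0 with he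
  have h1 : ∀ (φ : (Fin k → K) →ₗ[K] K) (j : Fin n),
      φ (fun i => X i j) = ∑ i, X i j * φ (e i) := by
    intro φ j
    rw [LinearMap.pi_apply_eq_sum_univ]
    simp only [smul_eq_mul]
    rfl
  have h0 : ∀ i i', (X * Matrix.diagonal lam * X.transpose) i i' = 0 := by
    rw [hsp]; intro i i'; rfl
  have hD : ∀ i i', (X * Matrix.diagonal lam * X.transpose) i i'
      = ∑ j, lam j * X i j * X i' j := by
    intro i i'
    rw [Matrix.mul_apply]
    simp only [Matrix.mul_diagonal, Matrix.transpose_apply]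
    exact Finset.sum_congr rfl fun j _ => by ring
  have A : ∑ j : Fin n, lam j * (φ₁ (fun i => X i j) * φ₂ (fun i => X i j))
      = ∑ j : Fin n, ∑ i, ∑ i', lam j * X i j * X i' j * (φ₁ (e i) * φ₂ (e i')) := by
    refine Finset.sum_congr rfl fun j _ => ?_
    rw [h1 φ₁ j, h1 φ₂ j, Finset.sum_mul_sum, Finset.mul_sum]
    refine Finset.sum_congr rfl fun i _ => ?_
    rw [Finset.mul_sum]
    exact Finset.sum_congr rfl fun i' _ => by ring
  have B : (∑ i, ∑ i', φ₁ (e i) *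
        ((X * Matrix.diagonal lam * X.transpose) i i' * φ₂ (e i')))
      = ∑ i, ∑ i', ∑ j : Fin n, lam j * X i j * X i' j * (φ₁ (e i) * φ₂ (e i')) := by
    refine Finset.sum_congr rfl fun i _ => Finset.sum_congr rfl fun i' _ => ?_
    rw [hD, Finset.sum_mul, Finset.mul_sum]
    exact Finset.sum_congr rfl fun j _ => by ring
  rw [A, Finset.sum_comm]
  have : ∀ i ∈ Finset.univ, (∑ j : Fin n, ∑ i',
      lam j * X i j * X i' j * (φ₁ (e i) * φ₂ (e i')))
      = ∑ i', ∑ j : Fin n, lam j * X i j * X i' j * (φ₁ (e i) * φ₂ (e i')) :=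
    fun i _ => Finset.sum_comm
  rw [Finset.sum_congr rfl this, ← B]
  simp [h0]

/-- If `X` is a `k × n` matrix of rank `k` over a field `K` that is
self-projecting with respect to some `λ ∈ (K^*)^n`, then the column matroid of `X`
(the matroid on `{1,…,n}` whose independent sets are the sets of linearly independent
columns of `X`) has no half-coloop, i.e. it is a self-projecting matroid. -/
theorem column_matroid_of_selfProjecting_no_halfColoop {K : Type*} [Field K] {k n : ℕ}
    (X : Matrix (Fin k) (Fin n) K) (hrank : X.rank = k)
    (lam : Fin n → K) (hlam : ∀ i, lam i ≠ 0)
    (hsp : X * Matrix.diagonal lam * X.transpose = 0)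
    (M : Matroid (Fin n)) (hE : M.E = Set.univ)
    (hindep : ∀ I : Set (Fin n),
      M.Indep I ↔ LinearIndependent K (fun j : I => fun i : Fin k => X i (j : Fin n))) :
    ¬ ∃ e : Fin n, M.IsHalfColoop k e := by
  rintro ⟨e, F₁, F₂, hF₁, hF₂, ⟨I₁, hI₁, hc₁⟩, ⟨I₂, hI₂, hc₂⟩, hunion⟩
  have heE : e ∈ M.E := by rw [hE]; exact Set.mem_univ e
  have heF : e ∉ F₁ ∪ F₂ := by rw [hunion]; simp
  have he₁ : e ∉ F₁ := fun h => heF (Or.inl h)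
  have he₂ : e ∉ F₂ := fun h => heF (Or.inr h)
  -- `k ≥ 1`
  have hk : 1 ≤ k := by
    by_contra h
    have hk0 : k = 0 := by omega
    subst hk0
    have heI₁ : e ∉ I₁ := fun hmem => he₁ (hI₁.subset hmem)
    have hins : M.Indep (insert e I₁) := by
      rw [hI₁.indep.insert_indep_iff_of_notMem heI₁, hI₁.closure_eq_closure, hF₁.closure]
      exact ⟨heE, he₁⟩
    have hli := (hindep _).1 hins
    have hne := hli.ne_zero ⟨e, Set.mem_insert e I₁⟩
    exact hne (funext fun i => i.elim0)
  obtain ⟨φ₁, hφ₁⟩ := exists_functional_of_flat X M hE hindep hF₁ hI₁ hc₁ hk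
  obtain ⟨φ₂, hφ₂⟩ := exists_functional_of_flat X M hE hindep hF₂ hI₂ hc₂ hk
  have hzero := sum_lam_mul_eq_zero X lam hsp φ₁ φ₂
  have hsingle : ∑ j : Fin n, lam j * (φ₁ (fun i => X i j) * φ₂ (fun i => X i j))
      = lam e * (φ₁ (fun i => X i e) * φ₂ (fun i => X i e)) := by
    refine Finset.sum_eq_single_of_mem e (Finset.mem_univ e) (fun j _ hje => ?_)
    have hj : j ∈ F₁ ∪ F₂ := by
      rw [hunion, hE]
      exact ⟨Set.mem_univ j, hje⟩
    rcases hj with h | h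
    · rw [(hφ₁ j).2 h]; ring
    · rw [(hφ₂ j).2 h]; ring
  rw [hsingle] at hzero
  have h₁ : φ₁ (fun i => X i e) ≠ 0 := fun h => he₁ ((hφ₁ e).1 h)
  have h₂ : φ₂ (fun i => X i e) ≠ 0 := fun h => he₂ ((hφ₂ e).1 h)
  exact mul_ne_zero (hlam e) (mul_ne_zero h₁ h₂) hzero
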